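/- arXiv:1709.05263 — 10 statements merged into one kernel-verified Lean document; each statement's English description precedes it below -/
import Mathlib

section
/- Let n, m be natural numbers with n ≥ 2, let f : Fin n → Fin m, and suppose there exist indices i ≠ j with f i = f j. Then every function h : Fin n → Fin m that is exp-adjacent to f satisfies f i ∉ Set.range h, and consequently h is also exp-adjacent to the constant function with value f i. (In other words, in the exponential graph K_m^{K_n} the neighborhood of a non-injective map f is contained in the neighborhood of the constant map at the repeated value, which is the fold used to reduce K_m^{K_n} to the subgraph of injective and constant maps.) -/
/-- `f` and `g` are adjacent in the exponential graph `K_m^{K_n}`: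
for all `i ≠ j`, `f i ≠ g j`. -/
def ExpAdj {n m : ℕ} (f g : Fin n → Fin m) : Prop :=
  ∀ ⦃i j : Fin n⦄, i ≠ j → f i ≠ g j

theorem stmt_0 (n m : ℕ) (hn : 2 ≤ n) (f : Fin n → Fin m)
    (i j : Fin n) (hij : i ≠ j) (hf : f i = f j)
    (h : Fin n → Fin m) (hadj : ExpAdj h f) :
    f i ∉ Set.range h ∧ ExpAdj h (fun _ => f i) := by
  have key : ∀ k, h k ≠ f i := by
    intro k
    by_cases hk : k = i
    · subst hk; rw [hf]; exact hadj hij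
    · exact hadj hk
  refine ⟨fun ⟨k, hk⟩ => key k hk, fun a b _ => key a⟩
end

section
/- Let n ≥ 2, let f : Fin n → Fin (n+1) be injective, and let x : Fin (n+1) be the element with x ∉ Set.range f. Let g : Fin n → Fin (n+1) be either injective or constant. Then g is exp-adjacent to f if and only if g = f, or g = const x, or g = Function.update f k x for some k : Fin n. (This identifies the neighborhood of an injective vertex f in the folded exponential graph G as {f, <x>, f_1, …, f_n}.) -/
theorem stmt_1 (n : ℕ) (hn : 2 ≤ n) (f : Fin n → Fin (n + 1))
    (hf : Function.Injective f) (x : Fin (n + 1)) (hx : x ∉ Set.range f)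
    (g : Fin n → Fin (n + 1))
    (hg : Function.Injective g ∨ ∃ c, g = fun _ => c) :
    ExpAdj g f ↔
      g = f ∨ (g = fun _ => x) ∨ ∃ k : Fin n, g = Function.update f k x := by
  have key : ∀ y : Fin (n + 1), y = x ∨ ∃ j, f j = y := by
    intro y
    have hcard : (insert x (Finset.image f Finset.univ)).card = n + 1 := by
      rw [Finset.card_insert_of_notMem (by
        simp only [Finset.mem_image, Finset.mem_univ, true_and]
        rintro ⟨j, hj⟩
        exact hx ⟨j, hj⟩)]
      rw [Finset.card_image_of_injective _ hf, Finset.card_univ, Fintype.card_fin]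
    have huniv : (insert x (Finset.image f Finset.univ)) = Finset.univ :=
      Finset.eq_univ_of_card _ (by simpa using hcard)
    have : y ∈ insert x (Finset.image f Finset.univ) := huniv ▸ Finset.mem_univ y
    rcases Finset.mem_insert.mp this with h | h
    · exact Or.inl h
    · obtain ⟨j, _, hj⟩ := Finset.mem_image.mp h
      exact Or.inr ⟨j, hj⟩
  constructor
  · intro h
    have step : ∀ i, g i = f i ∨ g i = x := by
      intro i
      by_contra hc
      push_neg at hc
      rcases key (g i) with h1 | ⟨j, hj⟩
      · exact hc.2 h1
      · have hij : i ≠ j := fun e => hc.1 (e ▸ hj.symm)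
        exact h hij hj.symm
    rcases hg with hginj | ⟨c, rfl⟩
    · by_cases hall : ∀ i, g i = f i
      · exact Or.inl (funext hall)
      · push_neg at hall
        obtain ⟨k, hk⟩ := hall
        have hgk : g k = x := (step k).resolve_left hk
        refine Or.inr (Or.inr ⟨k, funext fun i => ?_⟩)
        by_cases hik : i = k
        · subst hik; simp [hgk]
        · rw [Function.update_of_ne hik]
          refine (step i).resolve_right fun hix => hik (hginj (hix.trans hgk.symm))
    · refine Or.inr (Or.inl (funext fun _ => ?_))
      rcases key c with h1 | ⟨j, hj⟩
      · exact h1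
      · -- pick i ≠ j
        have : Nontrivial (Fin n) := Fin.nontrivial_iff_two_le.mpr hn
        obtain ⟨i, hij⟩ := exists_ne j
        exact absurd hj.symm (h hij)
  · rintro (rfl | rfl | ⟨k, rfl⟩) <;> intro i j hij
    · exact fun e => hij (hf e)
    · exact fun e => hx ⟨j, e.symm⟩
    · by_cases hik : i = k
      · subst hik
        simp only [Function.update_self]
        exact fun e => hx ⟨j, e.symm⟩
      · rw [Function.update_of_ne hik]
        exact fun e => hij (hf e)
end

section
/- Let n ≥ 1, let f : Fin n → Fin (n+1) be injective, and let x : Fin (n+1) be the element with x ∉ Set.range f. Then an arbitrary function h : Fin n → Fin (n+1) is exp-adjacent to f if and only if for every i : Fin n, either h i = f i or h i = x. -/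
theorem stmt_3 (n : ℕ) (hn : 1 ≤ n) (f : Fin n → Fin (n + 1))
    (hf : Function.Injective f) (x : Fin (n + 1)) (hx : x ∉ Set.range f)
    (h : Fin n → Fin (n + 1)) :
    ExpAdj h f ↔ ∀ i : Fin n, h i = f i ∨ h i = x := by
  have hrange : ∀ y : Fin (n + 1), y ≠ x → y ∈ Set.range f := by
    have hcard : (Finset.image f Finset.univ).card = n := by
      rw [Finset.card_image_of_injective _ hf, Finset.card_univ, Fintype.card_fin]
    have hcc : (Finset.image f Finset.univ)ᶜ.card = 1 := by
      rw [Finset.card_compl, hcard, Fintype.card_fin]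
      omega
    have hxc : x ∈ (Finset.image f Finset.univ)ᶜ := by
      simp only [Finset.mem_compl, Finset.mem_image, Finset.mem_univ, true_and, not_exists]
      intro j hj
      exact hx ⟨j, hj⟩
    have heq : (Finset.image f Finset.univ)ᶜ = {x} := by
      apply (Finset.eq_of_subset_of_card_le _ _).symm
      · intro z hz
        rw [Finset.mem_singleton] at hz
        exact hz ▸ hxc
      · rw [hcc, Finset.card_singleton]
    intro y hy
    have : y ∉ (Finset.image f Finset.univ)ᶜ := by
      rw [heq, Finset.mem_singleton]; exact hy
    rw [Finset.mem_compl, not_not, Finset.mem_image] at this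
    obtain ⟨j, _, hj⟩ := this
    exact ⟨j, hj⟩
  constructor
  · intro hadj i
    by_contra hc
    push_neg at hc
    obtain ⟨h1, h2⟩ := hc
    obtain ⟨j, hj⟩ := hrange (h i) h2
    have hij : i ≠ j := by intro e; subst e; exact h1 hj.symm
    exact hadj hij hj.symm
  · intro hi i j hij
    rcases hi i with h1 | h1
    · rw [h1]; exact fun e => hij (hf e)
    · rw [h1]; exact fun e => hx ⟨j, e.symm⟩
end

section
/- Let n ≥ 2, let f : Fin n → Fin (n+1) be injective, let x : Fin (n+1) satisfy x ∉ Set.range f, and let s, t : Fin n with s ≠ t. If a function h : Fin n → Fin (n+1) is exp-adjacent to both Function.update f s x and Function.update f t x, then h = f. (Hence {f_s, f_t} is a free face of the maximal simplex N(f) of the neighborhood complex: N(f) is the only maximal simplex containing {f_s, f_t}.) -/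
lemma aux_missing {n : ℕ} {g : Fin n → Fin (n+1)} (hg : Function.Injective g)
    {a b : Fin (n+1)} (ha : a ∉ Set.range g) (hb : b ∉ Set.range g) : a = b := by
  have hcard : (Finset.univ.image g).card = n := by
    rw [Finset.card_image_of_injective _ hg, Finset.card_univ, Fintype.card_fin]
  have hcc : (Finset.univ.image g)ᶜ.card ≤ 1 := by
    rw [Finset.card_compl, Fintype.card_fin, hcard]; omega
  have ha' : a ∈ (Finset.univ.image g)ᶜ := by
    simp only [Finset.mem_compl, Finset.mem_image]
    rintro ⟨i, -, rfl⟩; exact ha ⟨i, rfl⟩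
  have hb' : b ∈ (Finset.univ.image g)ᶜ := by
    simp only [Finset.mem_compl, Finset.mem_image]
    rintro ⟨i, -, rfl⟩; exact hb ⟨i, rfl⟩
  exact Finset.card_le_one.mp hcc _ ha' _ hb'

lemma aux_two {n : ℕ} {f h : Fin n → Fin (n+1)} (hf : Function.Injective f)
    {x : Fin (n+1)} (hx : x ∉ Set.range f) (s : Fin n)
    (hs : ExpAdj h (Function.update f s x)) (i : Fin n) :
    h i = Function.update f s x i ∨ h i = f s := by
  by_cases he : h i = Function.update f s x i
  · exact Or.inl he
  · right
    set g := Function.update f s x with hg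
    have hginj : Function.Injective g := by
      intro a b hab
      by_cases ha : a = s <;> by_cases hb : b = s
      · rw [ha, hb]
      · rw [hg] at hab
        rw [ha, Function.update_self, Function.update_of_ne hb] at hab
        exact absurd (⟨b, hab.symm⟩ : x ∈ Set.range f) hx
      · rw [hg] at hab
        rw [hb, Function.update_self, Function.update_of_ne ha] at hab
        exact absurd (⟨a, hab⟩ : x ∈ Set.range f) hx
      · rw [hg] at hab
        rw [Function.update_of_ne ha, Function.update_of_ne hb] at hab
        exact hf hab
    have hhi : h i ∉ Set.range g := by
      rintro ⟨j, hj⟩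
      rcases eq_or_ne i j with rfl | hij
      · exact he hj.symm
      · exact hs hij hj.symm
    have hfs : f s ∉ Set.range g := by
      rintro ⟨j, hj⟩
      rcases eq_or_ne j s with hjs | hjs
      · rw [hg, hjs, Function.update_self] at hj
        exact hx ⟨s, hj.symm⟩
      · rw [hg, Function.update_of_ne hjs] at hj
        exact hjs (hf hj)
    exact aux_missing hginj hhi hfs

theorem stmt_4 (n : ℕ) (hn : 2 ≤ n) (f : Fin n → Fin (n + 1))
    (hf : Function.Injective f) (x : Fin (n + 1)) (hx : x ∉ Set.range f)
    (s t : Fin n) (hst : s ≠ t) (h : Fin n → Fin (n + 1))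
    (hs : ExpAdj h (Function.update f s x))
    (ht : ExpAdj h (Function.update f t x)) :
    h = f := by
  funext i
  have H1 := aux_two hf hx s hs i
  have H2 := aux_two hf hx t ht i
  rcases eq_or_ne i s with rfl | his
  · -- i = s
    rw [Function.update_self] at H1
    rw [Function.update_of_ne hst] at H2
    rcases H1 with h1 | h1
    · rcases H2 with h2 | h2
      · exact h2
      · exact absurd ⟨t, (h1 ▸ h2).symm⟩ hx
    · exact h1
  · rw [Function.update_of_ne his] at H1
    rcases eq_or_ne i t with rfl | hit
    · rw [Function.update_self] at H2
      rcases H2 with h2 | h2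
      · rcases H1 with h1 | h1
        · exact h1
        · exact absurd ⟨s, (h2 ▸ h1).symm⟩ hx
      · exact h2
    · rw [Function.update_of_ne hit] at H2
      rcases H1 with h1 | h1
      · exact h1
      · rcases H2 with h2 | h2
        · exact absurd (hf (h1 ▸ h2).symm) his
        · exact absurd (hf (h1.symm.trans h2)) hst
end

section
/- Let n ≥ 2, let f : Fin n → Fin (n+1) be injective, let x : Fin (n+1) satisfy x ∉ Set.range f, and let a ∈ Set.range f. Then there is no function h : Fin n → Fin (n+1) that is simultaneously exp-adjacent to f, to the constant function const x, and to the constant function const a. (In the neighborhood complex this says N(f, <x>, <a>) = ∅.) -/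
theorem stmt_7 (n : ℕ) (hn : 2 ≤ n) (f : Fin n → Fin (n + 1))
    (hf : Function.Injective f) (x : Fin (n + 1)) (hx : x ∉ Set.range f)
    (a : Fin (n + 1)) (ha : a ∈ Set.range f) :
    ¬ ∃ h : Fin n → Fin (n + 1),
        ExpAdj h f ∧ ExpAdj h (fun _ => x) ∧ ExpAdj h (fun _ => a) := by
  rintro ⟨h, hhf, hhx, hha⟩
  -- every i has some j ≠ i since n ≥ 2
  have hne : ∀ i : Fin n, ∃ j : Fin n, j ≠ i := by
    intro i
    have : 1 < Fintype.card (Fin n) := by simp; omega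
    exact Fintype.exists_ne_of_one_lt_card this i
  have hx' : ∀ i : Fin n, h i ≠ x := by
    intro i
    obtain ⟨j, hj⟩ := hne i
    exact hhx (fun e => hj e.symm)
  have ha' : ∀ i : Fin n, h i ≠ a := by
    intro i
    obtain ⟨j, hj⟩ := hne i
    exact hha (fun e => hj e.symm)
  -- range f ∪ {x} = univ
  have hcover : ∀ y : Fin (n + 1), y = x ∨ y ∈ Set.range f := by
    intro y
    by_contra hc
    push_neg at hc
    obtain ⟨hyx, hyf⟩ := hc
    have : (insert y (insert x (Finset.image f Finset.univ))).card ≤ n + 1 := by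
      simpa using Finset.card_le_univ (insert y (insert x (Finset.image f Finset.univ)))
    have hxf : x ∉ Finset.image f Finset.univ := by
      simp only [Finset.mem_image]
      rintro ⟨i, -, rfl⟩
      exact hx ⟨i, rfl⟩
    have hyf' : y ∉ insert x (Finset.image f Finset.univ) := by
      simp only [Finset.mem_insert, Finset.mem_image]
      rintro (rfl | ⟨i, -, rfl⟩)
      · exact hyx rfl
      · exact hyf ⟨i, rfl⟩
    rw [Finset.card_insert_of_notMem hyf', Finset.card_insert_of_notMem hxf,
      Finset.card_image_of_injective _ hf, Finset.card_univ, Fintype.card_fin] at this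
    omega
  -- so h i = f i for all i
  have heq : ∀ i : Fin n, h i = f i := by
    intro i
    rcases hcover (h i) with hxi | ⟨j, hj⟩
    · exact absurd hxi (hx' i)
    · by_cases hij : j = i
      · rw [hij] at hj; exact hj.symm
      · exact absurd hj.symm (hhf (fun e => hij e.symm))
  obtain ⟨k, hk⟩ := ha
  exact ha' k (by rw [heq k, hk])
end

section
/- Let n ≥ 2, let f : Fin n → Fin (n+1) be injective, let x : Fin (n+1) satisfy x ∉ Set.range f, and let i, k : Fin n with i ≠ k. Then there is no function h : Fin n → Fin (n+1) that is simultaneously exp-adjacent to f, to Function.update f i x, and to the constant function const (f k). (In the neighborhood complex this says N(f, f_i, <f(k)>) = ∅.) -/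
theorem stmt_8 (n : ℕ) (hn : 2 ≤ n) (f : Fin n → Fin (n + 1))
    (hf : Function.Injective f) (x : Fin (n + 1)) (hx : x ∉ Set.range f)
    (i k : Fin n) (hik : i ≠ k) :
    ¬ ∃ h : Fin n → Fin (n + 1),
        ExpAdj h f ∧ ExpAdj h (Function.update f i x) ∧
          ExpAdj h (fun _ => f k) := by
  rintro ⟨h, hA, hB, hC⟩
  haveI : Nontrivial (Fin n) := Fin.nontrivial_iff_two_le.mpr hn
  obtain ⟨j, hj⟩ := exists_ne k
  -- h k ≠ f k
  have h1 : h k ≠ f k := hC (Ne.symm hj)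
  -- h k ≠ x
  have h2 : h k ≠ x := by
    have := hB (Ne.symm hik)
    simpa using this
  -- h k ≠ f m for m ≠ k
  have h3 : ∀ m, h k ≠ f m := by
    intro m
    rcases eq_or_ne m k with rfl | hm
    · exact h1
    · exact hA (Ne.symm hm)
  -- but {x} ∪ range f = univ
  have hcov : ∀ y : Fin (n + 1), y = x ∨ ∃ m, f m = y := by
    intro y
    by_contra hy
    push_neg at hy
    obtain ⟨hy1, hy2⟩ := hy
    have hyim : y ∉ Finset.image f Finset.univ := by
      simp only [Finset.mem_image, Finset.mem_univ, true_and, not_exists]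
      exact hy2
    have hxim : x ∉ insert y (Finset.image f Finset.univ) := by
      simp only [Finset.mem_insert, Finset.mem_image, Finset.mem_univ, true_and, not_or,
        not_exists]
      refine ⟨fun e => hy1 e.symm, fun m e => hx ⟨m, e⟩⟩
    have hle : (insert x (insert y (Finset.image f Finset.univ))).card ≤ n + 1 := by
      simpa using Finset.card_le_univ (insert x (insert y (Finset.image f Finset.univ)))
    rw [Finset.card_insert_of_notMem hxim, Finset.card_insert_of_notMem hyim,
      Finset.card_image_of_injective _ hf, Finset.card_univ, Fintype.card_fin] at hle
    omega
  rcases hcov (h k) with e | ⟨m, e⟩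
  · exact h2 e
  · exact h3 m e.symm
end

section
/- For every n ≥ 2 there exists a list l of permutations of Fin n such that l has no duplicates, every permutation of Fin n occurs in l (so l has length n!), and any two consecutive entries a, b of l differ by a single transposition, i.e., there exist i ≠ j in Fin n with b = a * Equiv.swap i j. (The n! elements of W_n can be ordered so that consecutive elements are related by swapping two values.) -/
open Equiv

private def SwapRel {α : Type} [DecidableEq α] (a b : Equiv.Perm α) : Prop :=
  ∃ i j : α, i ≠ j ∧ b = a * Equiv.swap i j

private lemma chunks {α : Type} [DecidableEq α] (t : α) (L : List (Equiv.Perm α))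
    (hhead : L.head? = some 1) (hfix : ∀ q ∈ L, q t = t)
    (hmem : ∀ q : Equiv.Perm α, q t = t → q ∈ L)
    (hnd : L.Nodup) (hchain : L.Chain' SwapRel) :
    ∀ (vs : List α), vs.Nodup → ∀ (s : Equiv.Perm α) (v : α), vs.head? = some v → s t = v →
      ∃ l : List (Equiv.Perm α), l.head? = some s ∧ (∀ p, p ∈ l ↔ p t ∈ vs) ∧ l.Nodup ∧
        l.Chain' SwapRel := by
  have hLne : L ≠ [] := by intro h; simp [h] at hhead
  intro vs
  induction vs with
  | nil => intro _ s v hv; simp at hv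
  | cons v vs ih =>
    intro hnodup s w hw hs
    have hvw : v = w := by simpa using hw
    subst hvw
    set chunk := L.map (fun q => s * q) with hchunk
    have hchead : chunk.head? = some s := by
      simp [hchunk, List.head?_map, hhead]
    have hcmem : ∀ p, p ∈ chunk ↔ p t = v := by
      intro p
      constructor
      · rintro hp
        obtain ⟨q, hq, rfl⟩ := List.mem_map.mp hp
        simp [Equiv.Perm.mul_apply, hfix q hq, hs]
      · intro hp
        refine List.mem_map.mpr ⟨s⁻¹ * p, hmem _ ?_, by group⟩
        have : s⁻¹ (p t) = t := by
          rw [hp, ← hs]; simp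
        simpa [Equiv.Perm.mul_apply] using this
    have hcnd : chunk.Nodup := hnd.map (mul_right_injective s)
    have hcchain : chunk.Chain' SwapRel := by
      refine List.isChain_map_of_isChain _ ?_ hchain
      rintro a b ⟨i, j, hij, rfl⟩
      exact ⟨i, j, hij, by rw [mul_assoc]⟩
    have hcne : chunk ≠ [] := by intro h; simp [h] at hchead
    set e := s * L.getLast hLne with he
    have hclast : chunk.getLast? = some e := by
      rw [hchunk, List.getLast?_map, List.getLast?_eq_getLast hLne]; rfl
    have het : e t = v := by
      simp [he, Equiv.Perm.mul_apply, hfix _ (List.getLast_mem hLne), hs]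
    cases vs with
    | nil =>
      refine ⟨chunk, hchead, ?_, hcnd, hcchain⟩
      intro p; simp [hcmem p]
    | cons v' vs' =>
      have hvnot : v ∉ v' :: vs' := (List.nodup_cons.mp hnodup).1
      have hv' : v' ≠ v := by
        intro h; exact hvnot (h ▸ List.mem_cons_self)
      set a := e⁻¹ v' with ha
      have hat : a ≠ t := by
        intro h
        apply hv'
        rw [← het, ← h, ha]; simp
      set s' : Equiv.Perm α := e * Equiv.swap a t with hs'
      have hs't : s' t = v' := by
        simp [hs', Equiv.Perm.mul_apply, Equiv.swap_apply_right, ha]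
      obtain ⟨l', hl'h, hl'mem, hl'nd, hl'chain⟩ :=
        ih hnodup.of_cons s' v' rfl hs't
      refine ⟨chunk ++ l', ?_, ?_, ?_, ?_⟩
      · rw [List.head?_append_of_ne_nil _ hcne]
        exact hchead
      · intro p
        simp only [List.mem_append, hcmem p, hl'mem p, List.mem_cons]
      · refine hcnd.append hl'nd ?_
        intro p hp hp'
        have h1 : p t = v := (hcmem p).mp hp
        have h2 : p t ∈ v' :: vs' := (hl'mem p).mp hp'
        rw [h1] at h2
        exact hvnot h2
      · refine hcchain.append hl'chain ?_
        intro x hx y hy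
        rw [hclast] at hx
        rw [hl'h] at hy
        simp at hx hy
        subst hx; subst hy
        exact ⟨a, t, hat, rfl⟩

private lemma key : ∀ (m : ℕ) (α : Type) [DecidableEq α] [Fintype α], Fintype.card α = m →
    ∃ l : List (Equiv.Perm α), l.Nodup ∧ (∀ p, p ∈ l) ∧ l.head? = some 1 ∧
      l.Chain' SwapRel := by
  intro m
  induction m using Nat.strong_induction_on with
  | _ m ih =>
    intro α _ _ hcard
    by_cases hm : Fintype.card α ≤ 1
    · have hss : Subsingleton α := Fintype.card_le_one_iff_subsingleton.mp hm
      have hp1 : ∀ p : Equiv.Perm α, p = 1 := fun p => Equiv.ext fun x => Subsingleton.elim _ _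
      exact ⟨[1], by simp, fun p => by simp [hp1 p], rfl, List.isChain_singleton _⟩
    · push_neg at hm
      have hne : Nonempty α := Fintype.card_pos_iff.mp (by omega)
      obtain ⟨t⟩ := hne
      have hβ : Fintype.card {x : α // x ≠ t} < m :=
        hcard ▸ Fintype.card_subtype_lt (x := t) (by simp)
      obtain ⟨Lβ, hndβ, hmemβ, hheadβ, hchainβ⟩ := ih _ hβ {x : α // x ≠ t} rfl
      set L := Lβ.map (fun σ => Equiv.Perm.ofSubtype σ) with hL
      have hfix : ∀ q ∈ L, q t = t := by
        intro q hq
        obtain ⟨σ, _, rfl⟩ := List.mem_map.mp hq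
        exact Equiv.Perm.ofSubtype_apply_of_not_mem σ (by simp)
      have hmem : ∀ q : Equiv.Perm α, q t = t → q ∈ L := by
        intro q hq
        have h : ∀ x : α, x ≠ t ↔ q x ≠ t := by
          intro x
          constructor
          · intro hx hqx
            exact hx (q.injective (by rw [hqx, hq]))
          · intro hx hxx
            exact hx (by rw [hxx, hq])
        refine List.mem_map.mpr ⟨q.subtypePerm (fun x => (h x).symm), hmemβ _, ?_⟩
        refine Equiv.Perm.ofSubtype_subtypePerm (fun x => (h x).symm) ?_
        intro x hx
        intro hxt
        subst hxt
        exact hx hq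
      have hLnd : L.Nodup := by
        refine hndβ.map ?_
        intro σ τ h
        ext x
        have := congrArg (fun f => f x.val) h
        simp only at this
        rw [Equiv.Perm.ofSubtype_apply_of_mem σ x.prop,
          Equiv.Perm.ofSubtype_apply_of_mem τ x.prop] at this
        simpa using this
      have hLhead : L.head? = some 1 := by
        simp [hL, List.head?_map, hheadβ]
      have hLchain : L.Chain' SwapRel := by
        refine List.isChain_map_of_isChain _ ?_ hchainβ
        rintro a b ⟨i, j, hij, rfl⟩
        refine ⟨i.val, j.val, fun h => hij (Subtype.ext h), ?_⟩
        rw [map_mul, Equiv.Perm.ofSubtype_swap_eq]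
      set vs := t :: (Finset.univ.erase t).toList with hvs
      have hvsnd : vs.Nodup := by
        refine List.nodup_cons.mpr ⟨?_, (Finset.univ.erase t).nodup_toList⟩
        intro h
        have := (Finset.mem_toList).mp h
        simp at this
      obtain ⟨l, hlh, hlmem, hlnd, hlchain⟩ :=
        chunks t L hLhead hfix hmem hLnd hLchain vs hvsnd 1 t rfl (by simp)
      refine ⟨l, hlnd, ?_, hlh, hlchain⟩
      intro p
      refine (hlmem p).mpr ?_
      by_cases hpt : p t = t
      · simp [hvs, hpt]
      · simp [hvs, Finset.mem_toList, hpt]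

theorem stmt_9 (n : ℕ) (hn : 2 ≤ n) :
    ∃ l : List (Equiv.Perm (Fin n)),
      l.Nodup ∧ (∀ p : Equiv.Perm (Fin n), p ∈ l) ∧
        l.length = Nat.factorial n ∧
        ∀ (k : ℕ) (h1 : k < l.length) (h2 : k + 1 < l.length),
          ∃ i j : Fin n, i ≠ j ∧
            l.get ⟨k + 1, h2⟩ = l.get ⟨k, h1⟩ * Equiv.swap i j := by
  obtain ⟨l, hnd, hmem, _, hchain⟩ := key n (Fin n) (Fintype.card_fin n)
  refine ⟨l, hnd, hmem, ?_, ?_⟩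
  · have huniv : l.toFinset = Finset.univ :=
      Finset.eq_univ_iff_forall.mpr fun p => List.mem_toFinset.mpr (hmem p)
    calc l.length = l.toFinset.card := (List.toFinset_card_of_nodup hnd).symm
      _ = Fintype.card (Equiv.Perm (Fin n)) := by rw [huniv, Finset.card_univ]
      _ = Nat.factorial n := by rw [Fintype.card_perm, Fintype.card_fin]
  · intro k h1 h2
    have := List.isChain_iff_getElem.mp hchain k (by omega)
    exact this
end

section
/- For n ≥ 2, the simple graph whose vertex set is the set of all functions Fin n → Fin (n+1), and in which two distinct functions f and g are adjacent if and only if they are exp-adjacent (i.e., f i ≠ g j for all i ≠ j), is connected. (This is the connectivity of the exponential graph K_{n+1}^{K_n}, giving H_0(N(K_{n+1}^{K_n}); ℤ₂) ≅ ℤ₂.) -/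
/-- The simple graph on all functions `Fin n → Fin m` associated to the
exponential graph `K_m^{K_n}`: two distinct functions are adjacent iff they
are exp-adjacent. -/
def expGraph (n m : ℕ) : SimpleGraph (Fin n → Fin m) where
  Adj f g := f ≠ g ∧ ExpAdj f g
  symm := ⟨by
    rintro f g ⟨hne, hadj⟩
    exact ⟨hne.symm, fun i j hij => (hadj hij.symm).symm⟩⟩
  loopless := ⟨fun f hf => hf.1 rfl⟩

theorem stmt_11 (n : ℕ) (hn : 2 ≤ n) : (expGraph n (n + 1)).Connected := by
  have hconst : ∀ (c : Fin (n+1)) (f : Fin n → Fin (n+1)),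
      (∀ i, f i ≠ c) → (expGraph n (n+1)).Reachable f (fun _ => c) := by
    intro c f hf
    apply SimpleGraph.Adj.reachable
    refine ⟨fun h => hf ⟨0, by omega⟩ (congrFun h _), fun i j _ => hf i⟩
  have hmiss : ∀ f : Fin n → Fin (n+1), ∃ c, ∀ i, f i ≠ c := by
    intro f
    have hns : ¬ Function.Surjective f := by
      intro h
      have := Fintype.card_le_of_surjective f h
      simp at this
    unfold Function.Surjective at hns
    push_neg at hns
    obtain ⟨c, hc⟩ := hns
    exact ⟨c, hc⟩
  refine ⟨fun f g => ?_⟩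
  obtain ⟨c, hc⟩ := hmiss f
  obtain ⟨d, hd⟩ := hmiss g
  have h1 := hconst c f hc
  have h2 := hconst d g hd
  refine h1.trans (SimpleGraph.Reachable.trans ?_ h2.symm)
  by_cases hcd : c = d
  · subst hcd; rfl
  · exact SimpleGraph.Adj.reachable
      ⟨fun h => hcd (congrFun h ⟨0, by omega⟩), fun i j _ => hcd⟩
end

section
/- Let n ≥ 2 and m ≥ 1, and let S : Finset (Fin m). Then there exists a function h : Fin n → Fin m that is exp-adjacent to the constant function const x for every x ∈ S if and only if S ≠ Finset.univ. (Hence the simplices of the neighborhood complex of K_m^{K_n} spanned by constant maps are exactly the proper subsets of the m constants, i.e., the boundary of the (m−1)-simplex, which underlies N(K_m^{K_n}) ≃ S^{m−2} for m < n.) -/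
theorem stmt_14 (n m : ℕ) (hn : 2 ≤ n) (hm : 1 ≤ m) (S : Finset (Fin m)) :
    (∃ h : Fin n → Fin m, ∀ x ∈ S, ExpAdj h (fun _ => x)) ↔
      S ≠ Finset.univ := by
  constructor
  · rintro ⟨h, hh⟩ hS
    have h01 : (⟨0, by omega⟩ : Fin n) ≠ ⟨1, by omega⟩ := by
      simp [Fin.ext_iff]
    exact hh (h ⟨0, by omega⟩) (hS ▸ Finset.mem_univ _) h01 rfl
  · intro hS
    obtain ⟨y, hy⟩ : ∃ y, y ∉ S := by
      by_contra hc
      push_neg at hc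
      exact hS (Finset.eq_univ_iff_forall.2 hc)
    exact ⟨fun _ => y, fun x hx _ _ _ hxy => hy (by simp at hxy; exact hxy ▸ hx)⟩
end

section
/- Let n ≥ 2. The number of pairs (f, i), where f : Fin n → Fin (n+1) is injective, i : Fin n, and the unique element c of Fin (n+1) with c ∉ Set.range f satisfies c ≠ 0 and c < f i, equals n! · n · (n−1) / 2. (This is the count |C₂| = n!·n(n−1)/2 of critical 2-cells in the discrete Morse matching, where the element 0 plays the role of the distinguished color 1.) -/
open Finset Function

lemma missing_unique {n : ℕ} {f : Fin n → Fin (n+1)} (hf : Injective f)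
    {c c' : Fin (n+1)} (hc : c ∉ Set.range f) (hc' : c' ∉ Set.range f) : c = c' := by
  classical
  have hs : (univ.image f).card = n := by
    rw [card_image_of_injective _ hf, card_univ, Fintype.card_fin]
  have hcompl : ((univ.image f)ᶜ).card = 1 := by
    rw [card_compl, hs]; simp
  have h1 : c ∈ (univ.image f)ᶜ := by
    simp only [mem_compl, mem_image, mem_univ, true_and, not_exists]
    intro i h; exact hc ⟨i, h⟩
  have h2 : c' ∈ (univ.image f)ᶜ := by
    simp only [mem_compl, mem_image, mem_univ, true_and, not_exists]
    intro i h; exact hc' ⟨i, h⟩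
  exact Finset.card_le_one.mp hcompl.le _ h1 _ h2

lemma image_eq {n : ℕ} {f : Fin n → Fin (n+1)} (hf : Injective f)
    {c : Fin (n+1)} (hc : c ∉ Set.range f) : univ.image f = univ.erase c := by
  classical
  apply Finset.eq_of_subset_of_card_le
  · intro x hx
    simp only [mem_image, mem_univ, true_and] at hx
    obtain ⟨i, rfl⟩ := hx
    exact Finset.mem_erase.mpr ⟨fun h => hc ⟨i, h⟩, mem_univ _⟩
  · rw [card_image_of_injective _ hf, card_univ, Fintype.card_fin,
      Finset.card_erase_of_mem (mem_univ c), card_univ, Fintype.card_fin]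
    simp

lemma card_i {n : ℕ} {f : Fin n → Fin (n+1)} (hf : Injective f)
    {c : Fin (n+1)} (hc : c ∉ Set.range f) :
    Nat.card {i : Fin n // c < f i} = n - c := by
  classical
  rw [Nat.card_eq_fintype_card, Fintype.card_subtype]
  have h1 : (univ.filter fun i => c < f i).card
      = ((univ.filter fun i => c < f i).image f).card :=
    (card_image_of_injective _ hf).symm
  rw [h1, ← Finset.filter_image, image_eq hf hc]
  rw [Finset.filter_erase, Finset.erase_eq_of_notMem (by simp)]
  have h2 : (univ.filter fun v : Fin (n+1) => c < v) = Finset.Ioi c := by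
    ext x; simp
  rw [h2, Fin.card_Ioi]
  simp

lemma card_f (n : ℕ) (c : Fin (n+1)) :
    Nat.card {f : Fin n → Fin (n+1) // Injective f ∧ c ∉ Set.range f}
      = Nat.factorial n := by
  classical
  have e : {f : Fin n → Fin (n+1) // Injective f ∧ c ∉ Set.range f}
      ≃ (Fin n ↪ {x : Fin (n+1) // x ≠ c}) :=
    { toFun := fun ⟨f, hf, hc⟩ =>
        ⟨fun i => ⟨f i, fun h => hc ⟨i, h⟩⟩,
         fun a b h => hf (congrArg Subtype.val h)⟩
      invFun := fun g =>
        ⟨fun i => (g i).1,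
          fun a b h => g.injective (Subtype.ext h),
          by rintro ⟨i, h⟩; exact (g i).2 h⟩
      left_inv := fun ⟨f, hf, hc⟩ => rfl
      right_inv := fun g => by ext i; rfl }
  rw [Nat.card_congr e, Nat.card_eq_fintype_card, Fintype.card_embedding_eq]
  have : Fintype.card {x : Fin (n+1) // x ≠ c} = n := by
    simp [Fintype.card_subtype_compl]
  rw [this, Fintype.card_fin, Nat.descFactorial_self]

lemma cardT (n : ℕ) (c : Fin (n+1)) :
    Nat.card {p : (Fin n → Fin (n+1)) × Fin n //
        Injective p.1 ∧ c ∉ Set.range p.1 ∧ c ≠ 0 ∧ c < p.1 p.2}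
      = if c = 0 then 0 else Nat.factorial n * (n - c) := by
  classical
  rcases eq_or_ne c 0 with rfl | hc0
  · have he : IsEmpty {p : (Fin n → Fin (n+1)) × Fin n //
        Injective p.1 ∧ (0:Fin (n+1)) ∉ Set.range p.1 ∧ (0:Fin (n+1)) ≠ 0 ∧ 0 < p.1 p.2} := by
      constructor; rintro ⟨p, _, _, h, _⟩; exact h rfl
    rw [Nat.card_of_isEmpty, if_pos rfl]
  · rw [if_neg hc0]
    rw [Nat.card_congr (Equiv.subtypeProdEquivSigmaSubtype
        (fun f (i : Fin n) => Injective f ∧ c ∉ Set.range f ∧ c ≠ 0 ∧ c < f i))]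
    rw [Nat.card_eq_fintype_card, Fintype.card_sigma]
    have key : ∀ f : Fin n → Fin (n+1),
        Fintype.card {i : Fin n // Injective f ∧ c ∉ Set.range f ∧ c ≠ 0 ∧ c < f i}
          = if Injective f ∧ c ∉ Set.range f then n - c.val else 0 := by
      intro f
      by_cases h : Injective f ∧ c ∉ Set.range f
      · rw [if_pos h]
        rw [← Nat.card_eq_fintype_card,
          Nat.card_congr (Equiv.subtypeEquivRight (fun i => by
            constructor
            · exact fun hh => hh.2.2.2
            · exact fun hh => ⟨h.1, h.2, hc0, hh⟩))]
        exact card_i h.1 h.2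
      · rw [if_neg h, Fintype.card_eq_zero_iff]
        constructor
        rintro ⟨i, h1, h2, _, _⟩
        exact h ⟨h1, h2⟩
    simp_rw [key]
    rw [← Finset.sum_filter, Finset.sum_const, smul_eq_mul]
    have : (univ.filter fun f : Fin n → Fin (n+1) => Injective f ∧ c ∉ Set.range f).card
        = Nat.factorial n := by
      rw [← Fintype.card_subtype, ← Nat.card_eq_fintype_card]
      exact card_f n c
    rw [this]

theorem stmt_15 (n : ℕ) (hn : 2 ≤ n) :
    Nat.card {p : (Fin n → Fin (n + 1)) × Fin n //
        Function.Injective p.1 ∧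
          ∃ c : Fin (n + 1), c ∉ Set.range p.1 ∧ c ≠ 0 ∧ c < p.1 p.2} =
      Nat.factorial n * n * (n - 1) / 2 := by
  classical
  -- bijection with sigma over c
  set T := fun c : Fin (n+1) => {p : (Fin n → Fin (n+1)) × Fin n //
        Injective p.1 ∧ c ∉ Set.range p.1 ∧ c ≠ 0 ∧ c < p.1 p.2} with hT
  have hbij : Function.Bijective (fun x : Σ c : Fin (n+1), T c =>
      (⟨x.2.1, x.2.2.1, x.1, x.2.2.2⟩ : {p : (Fin n → Fin (n + 1)) × Fin n //
        Function.Injective p.1 ∧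
          ∃ c : Fin (n + 1), c ∉ Set.range p.1 ∧ c ≠ 0 ∧ c < p.1 p.2})) := by
    constructor
    · rintro ⟨c, p, hp⟩ ⟨c', p', hp'⟩ h
      simp only [Subtype.mk.injEq] at h
      obtain rfl : p = p' := h
      have : c = c' := missing_unique hp.1 hp.2.1 hp'.2.1
      subst this; rfl
    · rintro ⟨p, hp, c, hc⟩
      exact ⟨⟨c, p, hp, hc⟩, rfl⟩
  rw [← Nat.card_eq_of_bijective _ hbij]
  rw [Nat.card_eq_fintype_card, Fintype.card_sigma]
  have : ∀ c : Fin (n+1), Fintype.card (T c) = if c = 0 then 0 else Nat.factorial n * (n - c.val) := by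
    intro c; rw [← Nat.card_eq_fintype_card]; exact cardT n c
  simp_rw [this, Fin.ext_iff, Fin.val_zero]
  refine (Fin.sum_univ_eq_sum_range (fun k => if k = 0 then 0 else Nat.factorial n * (n - k)) (n+1)).trans ?_
  rw [Finset.sum_range_succ' (fun k => if k = 0 then 0 else Nat.factorial n * (n - k)) n]
  have e1 : ∀ i : ℕ, (if i + 1 = 0 then 0 else Nat.factorial n * (n - (i + 1)))
      = Nat.factorial n * (n - 1 - i) := fun i => by
    rw [if_neg (Nat.succ_ne_zero i)]; congr 1; omega
  simp only [e1, if_pos, add_zero]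
  rw [Finset.sum_range_reflect (fun j => Nat.factorial n * j) n]
  rw [← Finset.mul_sum, Finset.sum_range_id]
  have h2 : 2 ∣ n * (n - 1) := by
    have h := Nat.even_mul_succ_self (n - 1)
    rw [show n - 1 + 1 = n by omega] at h
    rw [mul_comm]
    exact h.two_dvd
  rw [← Nat.mul_div_assoc (Nat.factorial n) h2, ← mul_assoc]
end
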